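/- The class 𝔎 = {[ω:1], [ω:2]} is InfEx-learnable: there is a learner M from finite sequences of (positive and negative) atomic facts to {0,1,?} such that for every structure 𝒮 with domain ⊆ ℕ isomorphic to [ω:1] or [ω:2], and every informant 𝕀 enumerating the full basic diagram D(𝒮), M(𝕀↾n) converges to the correct index. -/

import Mathlib

/-- `E` is an equivalence relation on the set `A ⊆ ℕ` (with support contained in `A`). -/
def isEquivOn (A : Set ℕ) (E : ℕ → ℕ → Prop) : Prop :=
  (∀ a b, E a b → a ∈ A ∧ b ∈ A) ∧ (∀ a ∈ A, E a a) ∧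
    (∀ a b, E a b → E b a) ∧ (∀ a b c, E a b → E b c → E a c)

/-- Code of the positive atomic diagram of the equivalence structure `(A, E)`:
codes of the true sentences `a ∼ b` (tag 0), `a = a` (tag 1), and `a ≠ b` (tag 2). -/
def posDiagEq (A : Set ℕ) (E : ℕ → ℕ → Prop) : Set ℕ :=
  {c | ∃ a b, E a b ∧ c = Nat.pair 0 (Nat.pair a b)} ∪
    {c | ∃ a ∈ A, c = Nat.pair 1 a} ∪
    {c | ∃ a ∈ A, ∃ b ∈ A, a ≠ b ∧ c = Nat.pair 2 (Nat.pair a b)}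

/-- The `E`-equivalence class of `a`. -/
def classOf (E : ℕ → ℕ → Prop) (a : ℕ) : Set ℕ := {b | E a b}

/-- The set of `E`-equivalence classes of elements of `A`. -/
def classesOf (A : Set ℕ) (E : ℕ → ℕ → Prop) : Set (Set ℕ) :=
  {C | ∃ a ∈ A, C = classOf E a}

/-- Code of the basic (full) diagram of `(A, E)`: the positive atomic diagram together
with the codes (tag 3) of the true negated atomic sentences `¬(a ∼ b)`. -/
def basicDiagEq (A : Set ℕ) (E : ℕ → ℕ → Prop) : Set ℕ :=
  posDiagEq A E ∪
    {c | ∃ a ∈ A, ∃ b ∈ A, ¬ E a b ∧ c = Nat.pair 3 (Nat.pair a b)}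

/-- The first `n` values of `f` as a list (`f↾n`). -/
def initSeg (f : ℕ → ℕ) (n : ℕ) : List ℕ := (List.range n).map f

/-- `(A, E)` has type `[ω:1]`: exactly one equivalence class, which is infinite. -/
def typeW1 (A : Set ℕ) (E : ℕ → ℕ → Prop) : Prop :=
  isEquivOn A E ∧ A.Infinite ∧ ∀ a ∈ A, ∀ b ∈ A, E a b

/-- `(A, E)` has type `[ω:2]`: exactly two equivalence classes, both infinite. -/
def typeW2 (A : Set ℕ) (E : ℕ → ℕ → Prop) : Prop :=
  isEquivOn A E ∧ ∃ a ∈ A, ∃ b ∈ A, ¬ E a b ∧ (∀ c ∈ A, E c a ∨ E c b) ∧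
    (classOf E a).Infinite ∧ (classOf E b).Infinite

/-- the class `{[ω:1], [ω:2]}` is InfEx-learnable: there is a learner
`M : List ℕ → Option ℕ` (with `none = ?`) which, on every informant (enumeration of the
basic diagram) of every equivalence structure of type `[ω:1]` or `[ω:2]` with domain
`⊆ ℕ`, converges to the correct index (`0` for `[ω:1]`, `1` for `[ω:2]`). -/
theorem class_w1_w2_infEx_learnable :
    ∃ M : List ℕ → Option ℕ,
      (∀ A E, typeW1 A E → ∀ f : ℕ → ℕ, Set.range f = basicDiagEq A E →
        ∃ N, ∀ n ≥ N, M (initSeg f n) = some 0) ∧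
      (∀ A E, typeW2 A E → ∀ f : ℕ → ℕ, Set.range f = basicDiagEq A E →
        ∃ N, ∀ n ≥ N, M (initSeg f n) = some 1) := by
  refine ⟨fun l => if l.any (fun c => c.unpair.1 = 3) then some 1 else some 0, ?_, ?_⟩
  · intro A E h1 f hf
    refine ⟨0, fun n _ => ?_⟩
    have hno : ∀ i, (f i).unpair.1 ≠ 3 := by
      intro i
      have : f i ∈ basicDiagEq A E := hf ▸ Set.mem_range_self i
      rcases this with h | h
      · rcases h with (⟨a, b, _, hc⟩ | ⟨a, _, hc⟩) | ⟨a, _, b, _, _, hc⟩ <;>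
          simp [hc, Nat.unpair_pair]
      · obtain ⟨a, ha, b, hb, hne, _⟩ := h
        exact absurd (h1.2.2 a ha b hb) hne
    dsimp only
    rw [if_neg]
    simp only [initSeg]
    simp only [List.any_map, List.any_eq_true, not_exists, not_and]
    intro i _
    simp [hno i]
  · intro A E h2 f hf
    obtain ⟨_, a, ha, b, hb, hne, _⟩ := h2
    have hmem : Nat.pair 3 (Nat.pair a b) ∈ Set.range f := by
      rw [hf]; exact Or.inr ⟨a, ha, b, hb, hne, rfl⟩
    obtain ⟨k, hk⟩ := hmem
    refine ⟨k + 1, fun n hn => ?_⟩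
    have : (initSeg f n).any (fun c => c.unpair.1 = 3) = true := by
      simp only [initSeg, List.any_map, List.any_eq_true]
      exact ⟨k, List.mem_range.2 (by omega), by simp [hk, Nat.unpair_pair]⟩
    simp [this]
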